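/- Let J be a nonempty proper subset of {0,…,d}. For every z ∈ M_J° and every x ∈ 𝔩(J), the vector ρ'(z·ι(x))(δ_0) lies in span_K{δ_μ : J ⊆ J(μ) and J ≠ J(μ)}. -/

import Mathlib

open UniversalEnvelopingAlgebra

attribute [local instance 100] LieRing.ofAssociativeRing

private lemma zz (t c : ℤ) : t * (if t = 0 then c else 0) = 0 := by
  split_ifs with h
  · rw [h, zero_mul]
  · rw [mul_zero]

private lemma zz' (t c : ℤ) : (if t = 0 then c else 0) * t = 0 := by
  split_ifs with h
  · rw [h, mul_zero]
  · rw [zero_mul]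

private noncomputable def Tmap (K : Type) [Field K] (d : ℕ) (k l : Fin (d+1)) :
    Module.End K ((Fin (d+1) → ℤ) →₀ K) :=
  Finsupp.lsum K fun μ => LinearMap.toSpanSingleton K _
    ((if μ k = 0 then μ l - 1 else 0 : ℤ) •
      Finsupp.single (μ + Pi.single k 1 - Pi.single l 1) (1:K))

private lemma Tmap_single {K : Type} [Field K] {d : ℕ} (k l : Fin (d+1))
    (ν : Fin (d+1) → ℤ) (c : K) :
    Tmap K d k l (Finsupp.single ν c) =
      c • ((if ν k = 0 then ν l - 1 else 0 : ℤ) •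
        Finsupp.single (ν + Pi.single k 1 - Pi.single l 1) (1:K)) := by
  simp [Tmap, Finsupp.lsum_single, LinearMap.toSpanSingleton_apply]

private lemma Tmap_comm {K : Type} [Field K] {d : ℕ}
    (ρ' : UniversalEnvelopingAlgebra K (Matrix (Fin (d+1)) (Fin (d+1)) K) →ₐ[K]
        Module.End K ((Fin (d+1) → ℤ) →₀ K))
    (hρ'₁ : ∀ (i j : Fin (d+1)), i ≠ j → ∀ ν : Fin (d+1) → ℤ,
      ρ' (ι K (Matrix.single i j (1:K))) (Finsupp.single ν (1:K)) =
        (ν j - 1) • Finsupp.single (ν + Pi.single i 1 - Pi.single j 1) (1:K))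
    (i j k l : Fin (d+1)) (hij : i ≠ j) (hik : i ≠ k) (hil : i ≠ l) (hkl : k ≠ l) :
    Commute (ρ' (ι K (Matrix.single i j (1:K)))) (Tmap K d k l) := by
  have key : ∀ ν : Fin (d+1) → ℤ,
      (ρ' (ι K (Matrix.single i j (1:K)))) (Tmap K d k l (Finsupp.single ν (1:K))) =
      Tmap K d k l ((ρ' (ι K (Matrix.single i j (1:K)))) (Finsupp.single ν (1:K))) := by
    intro ν
    rw [Tmap_single, hρ'₁ i j hij, one_smul, map_zsmul, map_zsmul, hρ'₁ i j hij, Tmap_single,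
      one_smul]
    have haddr : ν + Pi.single k 1 - Pi.single l 1 + Pi.single i 1 - Pi.single j 1
        = ν + Pi.single i 1 - Pi.single j 1 + Pi.single k 1 - Pi.single l 1 := by
      ext m; simp; ring
    rw [haddr, smul_smul, smul_smul]
    congr 1
    simp only [Pi.add_apply, Pi.sub_apply, Pi.single_apply, if_neg (Ne.symm hik),
      if_neg (Ne.symm hil)]
    rcases eq_or_ne j k with rfl | hjk
    · have hjl : j ≠ l := hkl
      simp only [if_pos rfl, if_neg hjl, if_neg (Ne.symm hjl), add_zero, sub_zero]
      split_ifs with h h' h'' h'''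
      all_goals first
        | ring1
        | (exfalso; omega)
        | linear_combination (ν l - 1) * h
        | linear_combination (1 - ν l) * h
        | linear_combination (ν l - 1) * h'
        | linear_combination (1 - ν l) * h'
        | linear_combination (ν l - 1) * h''
        | linear_combination (1 - ν l) * h''
        | linear_combination (ν l - 1) * h'''
        | linear_combination (1 - ν l) * h'''
    · rcases eq_or_ne j l with rfl | hjl
      · simp only [if_pos rfl, if_neg hjk, if_neg (Ne.symm hjk), add_zero, sub_zero]
        split_ifs with h h' h'' h'''
        all_goals first
        | ring1
        | (exfalso; omega)
        | linear_combination (ν l - 1) * h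
        | linear_combination (1 - ν l) * h
        | linear_combination (ν l - 1) * h'
        | linear_combination (1 - ν l) * h'
        | linear_combination (ν l - 1) * h''
        | linear_combination (1 - ν l) * h''
        | linear_combination (ν l - 1) * h'''
        | linear_combination (1 - ν l) * h'''
      · simp only [if_neg hjk, if_neg (Ne.symm hjk), if_neg hjl, if_neg (Ne.symm hjl),
          add_zero, sub_zero]
        split_ifs with h h' h'' h'''
        all_goals first
        | ring1
        | (exfalso; omega)
        | linear_combination (ν l - 1) * h
        | linear_combination (1 - ν l) * h
        | linear_combination (ν l - 1) * h'
        | linear_combination (1 - ν l) * h'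
        | linear_combination (ν l - 1) * h''
        | linear_combination (1 - ν l) * h''
        | linear_combination (ν l - 1) * h'''
        | linear_combination (1 - ν l) * h'''
  unfold Commute SemiconjBy
  apply Finsupp.lhom_ext
  intro ν b
  have hb : (Finsupp.single ν b : (Fin (d+1) → ℤ) →₀ K) = b • Finsupp.single ν 1 := by
    rw [Finsupp.smul_single, smul_eq_mul, mul_one]
  rw [Module.End.mul_apply, Module.End.mul_apply, hb, map_smul, map_smul, map_smul, map_smul,
    key]

private lemma Tmap_span {K : Type} [Field K] {d : ℕ} (J : Set (Fin (d+1)))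
    (k l : Fin (d+1)) (hk : k ∉ J) (hl : l ∉ J) (hkl : k ≠ l)
    (v : (Fin (d+1) → ℤ) →₀ K)
    (hv : v ∈ Submodule.span K {w : (Fin (d+1) → ℤ) →₀ K | ∃ μ : Fin (d+1) → ℤ,
        (∑ m, μ m) = 0 ∧ (∀ m ∈ J, μ m = 1) ∧ (∀ m ∉ J, μ m ≤ 0) ∧
        w = Finsupp.single μ (1:K)} ⊔
      Submodule.span K {w : (Fin (d+1) → ℤ) →₀ K | ∃ μ : Fin (d+1) → ℤ,
        J ⊆ {m | 0 < μ m} ∧ J ≠ {m | 0 < μ m} ∧ w = Finsupp.single μ (1:K)}) :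
    Tmap K d k l v ∈ Submodule.span K {w : (Fin (d+1) → ℤ) →₀ K | ∃ μ : Fin (d+1) → ℤ,
        J ⊆ {m | 0 < μ m} ∧ J ≠ {m | 0 < μ m} ∧ w = Finsupp.single μ (1:K)} := by
  set S2 : Set ((Fin (d+1) → ℤ) →₀ K) := {w | ∃ μ : Fin (d+1) → ℤ,
        J ⊆ {m | 0 < μ m} ∧ J ≠ {m | 0 < μ m} ∧ w = Finsupp.single μ (1:K)} with hS2
  -- key: image of each generator is in span S2
  have hgen : ∀ μ : Fin (d+1) → ℤ, (J ⊆ {m | 0 < μ m} ∨ (∀ m ∈ J, μ m = 1)) →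
      Tmap K d k l (Finsupp.single μ (1:K)) ∈ Submodule.span K S2 := by
    intro μ hμ
    rw [Tmap_single, one_smul]
    by_cases h0 : μ k = 0
    · rw [if_pos h0, ← Int.cast_smul_eq_zsmul K]
      refine Submodule.smul_mem _ _ (Submodule.subset_span ?_)
      refine ⟨μ + Pi.single k 1 - Pi.single l 1, ?_, ?_, rfl⟩
      · intro m hm
        have hmk : m ≠ k := fun e => hk (e ▸ hm)
        have hml : m ≠ l := fun e => hl (e ▸ hm)
        have : (μ + Pi.single k 1 - Pi.single l 1 : Fin (d+1) → ℤ) m = μ m := by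
          simp [Pi.single_apply, Ne.symm hmk, Ne.symm hml]
        show 0 < (μ + Pi.single k 1 - Pi.single l 1 : Fin (d+1) → ℤ) m
        rw [this]
        rcases hμ with h | h
        · exact h hm
        · rw [h m hm]; norm_num
      · intro heq
        have hkmem : k ∈ {m | 0 < (μ + Pi.single k 1 - Pi.single l 1 : Fin (d+1) → ℤ) m} := by
          have : (μ + Pi.single k 1 - Pi.single l 1 : Fin (d+1) → ℤ) k = μ k + 1 := by
            simp [Pi.single_apply, Ne.symm hkl]
          show 0 < (μ + Pi.single k 1 - Pi.single l 1 : Fin (d+1) → ℤ) k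
          rw [this, h0]; norm_num
        exact hk (heq ▸ hkmem)
    · rw [if_neg h0, zero_smul]
      exact Submodule.zero_mem _
  have hle : Submodule.span K {w : (Fin (d+1) → ℤ) →₀ K | ∃ μ : Fin (d+1) → ℤ,
        (∑ m, μ m) = 0 ∧ (∀ m ∈ J, μ m = 1) ∧ (∀ m ∉ J, μ m ≤ 0) ∧
        w = Finsupp.single μ (1:K)} ⊔ Submodule.span K S2
      ≤ (Submodule.span K S2).comap (Tmap K d k l) := by
    refine sup_le ?_ ?_
    · rw [Submodule.span_le]
      rintro w ⟨μ, -, h2, -, rfl⟩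
      exact hgen μ (Or.inr h2)
    · rw [Submodule.span_le]
      rintro w ⟨μ, h1, -, rfl⟩
      exact hgen μ (Or.inl h1)
  exact hle hv

/-- For J a nonempty proper subset of {0,…,d}, z ∈ M_J° and x ∈ 𝔩(J),
the vector ρ'(z·ι(x))(δ_0) lies in span_K{δ_μ : J ⊊ J(μ)} (M_J°·𝔩(J) ⊆ 𝔟_J^>). -/
theorem stmt_15 (K : Type) [Field K] [CharZero K] (d : ℕ) (hd : 1 ≤ d)
    (ρ' : UniversalEnvelopingAlgebra K (Matrix (Fin (d+1)) (Fin (d+1)) K) →ₐ[K]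
        Module.End K ((Fin (d+1) → ℤ) →₀ K))
    (hρ'₁ : ∀ (i j : Fin (d+1)), i ≠ j → ∀ ν : Fin (d+1) → ℤ,
      ρ' (ι K (Matrix.single i j (1:K))) (Finsupp.single ν (1:K)) =
        (ν j - 1) • Finsupp.single (ν + Pi.single i 1 - Pi.single j 1) (1:K))
    (hρ'₂ : ∀ (k : Fin (d+1)) (ν : Fin (d+1) → ℤ),
      ρ' (ι K (Matrix.single k k (1:K))) (Finsupp.single ν (1:K)) =
        ν k • Finsupp.single ν (1:K))
    (J : Set (Fin (d+1))) (hJ : J.Nonempty) (hJ' : J ≠ Set.univ)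
    (AJ : Subalgebra K (UniversalEnvelopingAlgebra K (Matrix (Fin (d+1)) (Fin (d+1)) K)))
    (hAJ : AJ = Algebra.adjoin K
      {w | ∃ i ∈ J, ∃ j ∉ J, w = ι K (Matrix.single i j (1:K))})
    (z : UniversalEnvelopingAlgebra K (Matrix (Fin (d+1)) (Fin (d+1)) K))
    -- z ∈ M_J°
    (hz : z ∈ AJ)
    (hzδ : ρ' z (Finsupp.single (0 : Fin (d+1) → ℤ) (1:K)) ∈
      Submodule.span K {w : (Fin (d+1) → ℤ) →₀ K | ∃ μ : Fin (d+1) → ℤ,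
        (∑ k, μ k) = 0 ∧ (∀ k ∈ J, μ k = 1) ∧ (∀ k ∉ J, μ k ≤ 0) ∧
        w = Finsupp.single μ (1:K)} ⊔
      Submodule.span K {w : (Fin (d+1) → ℤ) →₀ K | ∃ μ : Fin (d+1) → ℤ,
        J ⊆ {k | 0 < μ k} ∧ J ≠ {k | 0 < μ k} ∧ w = Finsupp.single μ (1:K)})
    (x : Matrix (Fin (d+1)) (Fin (d+1)) K)
    (hx : ∀ i j : Fin (d+1), i ∈ J ∨ j ∈ J → x i j = 0) :
    ρ' (z * ι K x) (Finsupp.single (0 : Fin (d+1) → ℤ) (1:K)) ∈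
      Submodule.span K {w : (Fin (d+1) → ℤ) →₀ K | ∃ μ : Fin (d+1) → ℤ,
        J ⊆ {k | 0 < μ k} ∧ J ≠ {k | 0 < μ k} ∧ w = Finsupp.single μ (1:K)} := by
  classical
  have hxdec : ι K x = ∑ p : Fin (d+1), ∑ q : Fin (d+1),
      x p q • ι K (Matrix.single p q (1:K)) := by
    have hfx : ∀ m : Matrix (Fin (d+1)) (Fin (d+1)) K,
        (ι K : Matrix (Fin (d+1)) (Fin (d+1)) K →ₗ⁅K⁆
          UniversalEnvelopingAlgebra K (Matrix (Fin (d+1)) (Fin (d+1)) K)).toLinearMap m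
          = ι K m := fun _ => rfl
    simp only [← hfx]
    conv_lhs => rw [Matrix.matrix_eq_sum_single x]
    rw [map_sum]
    refine Finset.sum_congr rfl fun p _ => ?_
    rw [map_sum]
    refine Finset.sum_congr rfl fun q _ => ?_
    rw [← map_smul, Matrix.smul_single, smul_eq_mul, mul_one]
  rw [hxdec]
  simp only [Finset.mul_sum, mul_smul_comm, map_sum, map_smul, LinearMap.sum_apply,
    LinearMap.smul_apply]
  refine Submodule.sum_mem _ fun p _ => Submodule.sum_mem _ fun q _ => ?_
  by_cases hpJ : p ∈ J ∨ q ∈ J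
  · rw [hx p q hpJ, zero_smul]
    exact Submodule.zero_mem _
  · push_neg at hpJ
    obtain ⟨hp, hq⟩ := hpJ
    refine Submodule.smul_mem _ _ ?_
    rw [map_mul, Module.End.mul_apply]
    by_cases hpq : p = q
    · subst hpq
      rw [hρ'₂ p 0, show ((0 : Fin (d+1) → ℤ) p) = 0 from rfl, zero_smul, map_zero]
      exact Submodule.zero_mem _
    · have hcz : Commute (ρ' z) (Tmap K d p q) := by
        clear hzδ hxdec
        rw [hAJ] at hz
        induction hz using Algebra.adjoin_induction with
        | mem w hw =>
          obtain ⟨i, hi, j, hj, rfl⟩ := hw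
          exact Tmap_comm ρ' hρ'₁ i j p q (fun e => hj (e ▸ hi)) (fun e => hp (e ▸ hi))
            (fun e => hq (e ▸ hi)) hpq
        | algebraMap r =>
          rw [AlgHom.commutes]
          exact Algebra.commute_algebraMap_left r _
        | add a b ha hb h1 h2 =>
          rw [map_add]
          exact h1.add_left h2
        | mul a b ha hb h1 h2 =>
          rw [map_mul]
          exact h1.mul_left h2
      have h1 : ρ' (ι K (Matrix.single p q (1:K)))
            (Finsupp.single (0 : Fin (d+1) → ℤ) (1:K)) =
          Tmap K d p q (Finsupp.single (0 : Fin (d+1) → ℤ) (1:K)) := by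
        rw [hρ'₁ p q hpq 0, Tmap_single, one_smul,
          if_pos (show (0 : Fin (d+1) → ℤ) p = 0 from rfl)]
      rw [h1, show (ρ' z) (Tmap K d p q (Finsupp.single (0 : Fin (d+1) → ℤ) (1:K)))
          = Tmap K d p q (ρ' z (Finsupp.single (0 : Fin (d+1) → ℤ) (1:K))) from by
        rw [← Module.End.mul_apply, ← Module.End.mul_apply, hcz]]
      exact Tmap_span J p q hp hq hpq _ hzδ
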